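/- For k ∈ ℤ define u_k = (2+√3)^k − (2−√3)^k. Let A, B be real numbers with B ≠ 0, let M ≥ 1, and assume u_m + u_{m-1}·B ≠ 0 for every 1 ≤ m ≤ M. Define sequences (A_m) and (B_m) by A_1 = A, B_1 = B; A_2 = 4A/(4+B), B_2 = −B/(4+B); and for 2 ≤ m ≤ M−1: A_{m+1} = [4·A_m + (B_m/B_{m-1})·A_{m-1}]/(4 + B_m/B_{m-1}) and B_{m+1} = −B_m/(4 + B_m/B_{m-1}). Then for every 1 ≤ m ≤ M these recursions are well defined (all denominators are nonzero, and B_m ≠ 0), and A_m = u_m·A/(u_m + u_{m-1}·B), B_m = (−1)^{m-1}·u_1·B/(u_m + u_{m-1}·B). -/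

import Mathlib

noncomputable def uSeq (k : ℤ) : ℝ :=
  (2 + Real.sqrt 3) ^ k - (2 - Real.sqrt 3) ^ k

lemma sqrt3_lt_two : Real.sqrt 3 < 2 := by
  nlinarith [Real.sq_sqrt (by norm_num : (3:ℝ) ≥ 0), Real.sqrt_nonneg 3]

lemma uSeq_zero : uSeq 0 = 0 := by simp [uSeq]

lemma uSeq_one_pos : 0 < uSeq 1 := by
  simp [uSeq]

lemma uSeq_rec (k : ℤ) : uSeq (k + 1) = 4 * uSeq k - uSeq (k - 1) := by
  have hs := Real.sq_sqrt (by norm_num : (0:ℝ) ≤ 3)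
  have ha : (2 + Real.sqrt 3) ≠ 0 := by positivity
  have hb : (2 - Real.sqrt 3) ≠ 0 := by have := sqrt3_lt_two; linarith
  have hab : (2 + Real.sqrt 3) * (2 - Real.sqrt 3) = 1 := by nlinarith
  have h1 : (2 + Real.sqrt 3) ^ (k + 1) = (2 + Real.sqrt 3) ^ k * (2 + Real.sqrt 3) :=
    zpow_add_one₀ ha k
  have h2 : (2 + Real.sqrt 3) ^ (k - 1) = (2 + Real.sqrt 3) ^ k * (2 - Real.sqrt 3) := by
    rw [zpow_sub_one₀ ha k]
    congr 1
    field_simp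
    linarith [hab]
  have h3 : (2 - Real.sqrt 3) ^ (k + 1) = (2 - Real.sqrt 3) ^ k * (2 - Real.sqrt 3) :=
    zpow_add_one₀ hb k
  have h4 : (2 - Real.sqrt 3) ^ (k - 1) = (2 - Real.sqrt 3) ^ k * (2 + Real.sqrt 3) := by
    rw [zpow_sub_one₀ hb k]
    congr 1
    field_simp
    linarith [hab]
  simp only [uSeq, h1, h2, h3, h4]
  ring

/-- **Closed form of the backward extension coefficients in the uniform-per-patch
case.** With base values `A_1 = A`, `B_1 = B ≠ 0` and the stated recursions,
all denominators are nonzero, `B_m ≠ 0`, and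
`A_m = u_m A/(u_m + u_{m-1} B)`, `B_m = (−1)^{m-1} u_1 B/(u_m + u_{m-1} B)`
for every `1 ≤ m ≤ M`. -/
theorem backward_coefficients_closed_form
    (A B : ℝ) (hB : B ≠ 0) (M : ℕ) (hM : 1 ≤ M)
    (hden : ∀ m : ℕ, 1 ≤ m → m ≤ M → uSeq (m : ℤ) + uSeq ((m : ℤ) - 1) * B ≠ 0)
    (As Bs : ℕ → ℝ)
    (hA1 : As 1 = A) (hB1 : Bs 1 = B)
    (hA2 : 2 ≤ M → As 2 = 4 * A / (4 + B))
    (hB2 : 2 ≤ M → Bs 2 = -B / (4 + B))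
    (hArec : ∀ m : ℕ, 2 ≤ m → m ≤ M - 1 →
      As (m + 1) = (4 * As m + (Bs m / Bs (m - 1)) * As (m - 1)) / (4 + Bs m / Bs (m - 1)))
    (hBrec : ∀ m : ℕ, 2 ≤ m → m ≤ M - 1 →
      Bs (m + 1) = -Bs m / (4 + Bs m / Bs (m - 1))) :
    (2 ≤ M → 4 + B ≠ 0) ∧
    (∀ m : ℕ, 2 ≤ m → m ≤ M - 1 → 4 + Bs m / Bs (m - 1) ≠ 0) ∧
    (∀ m : ℕ, 1 ≤ m → m ≤ M →
      Bs m ≠ 0 ∧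
      As m = uSeq (m : ℤ) * A / (uSeq (m : ℤ) + uSeq ((m : ℤ) - 1) * B) ∧
      Bs m = (-1 : ℝ) ^ (m - 1) * uSeq 1 * B / (uSeq (m : ℤ) + uSeq ((m : ℤ) - 1) * B)) := by
  set u : ℕ → ℝ := fun n => uSeq (n : ℤ) with hu
  set D : ℕ → ℝ := fun n => uSeq (n : ℤ) + uSeq ((n : ℤ) - 1) * B with hD
  have hu1 : u 1 ≠ 0 := by
    have := uSeq_one_pos
    simp only [hu, Nat.cast_one]
    linarith
  have hu0 : uSeq ((1 : ℤ) - 1) = 0 := by norm_num [uSeq_zero]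
  have hurec : ∀ n : ℕ, u (n + 2) = 4 * u (n + 1) - u n := by
    intro n
    simp only [hu]
    push_cast
    rw [show (n:ℤ) + 2 = (n:ℤ) + 1 + 1 by ring, uSeq_rec ((n:ℤ) + 1)]
    norm_num
  have hDval : ∀ n : ℕ, D (n + 1) = u (n + 1) + u n * B := by
    intro n
    simp only [hD, hu]
    push_cast
    ring_nf
  have hD1 : D 1 = u 1 := by
    rw [hDval 0]
    simp only [hu, Nat.cast_zero, uSeq_zero]
    ring
  have hu2 : u 2 = 4 * u 1 := by
    have := hurec 0
    simp only [hu, Nat.cast_zero, uSeq_zero] at this ⊢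
    linarith [this]
  have hD2 : D 2 = u 1 * (4 + B) := by
    rw [hDval 1, hu2]; ring
  have hDrec : ∀ n : ℕ, D (n + 3) = 4 * D (n + 2) - D (n + 1) := by
    intro n
    rw [hDval (n + 2), hDval (n + 1), hDval n, hurec (n + 1), hurec n]
    ring
  have hDne : ∀ n : ℕ, 1 ≤ n → n ≤ M → D n ≠ 0 := fun n h1 h2 => hden n h1 h2
  -- Part 1
  have h4B : 2 ≤ M → 4 + B ≠ 0 := by
    intro h2M hcon
    have := hDne 2 (by norm_num) h2M
    rw [hD2, hcon, mul_zero] at this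
    exact this rfl
  -- Main induction
  have key : ∀ m : ℕ, 1 ≤ m → m ≤ M →
      Bs m ≠ 0 ∧ As m = u m * A / D m ∧ Bs m = (-1 : ℝ) ^ (m - 1) * u 1 * B / D m := by
    intro m
    induction m using Nat.strong_induction_on with
    | _ m ih =>
      match m with
      | 0 => intro h _; exact absurd h (by norm_num)
      | 1 => intro _ _
             refine ⟨by rw [hB1]; exact hB, ?_, ?_⟩
             · rw [hA1, hD1]; field_simp
             · rw [hB1, hD1]; field_simp; norm_num
      | 2 => intro _ h2M
             have h4 := h4B h2M
             have hD2ne := hDne 2 (by norm_num) h2M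
             refine ⟨?_, ?_, ?_⟩
             · rw [hB2 h2M]
               exact div_ne_zero (neg_ne_zero.mpr hB) h4
             · rw [hA2 h2M, hD2, hu2]
               field_simp
             · rw [hB2 h2M, hD2]
               field_simp
               ring
      | (n + 3) => intro _ hmM
                   have h1M : (n : ℕ) + 1 ≤ M := by omega
                   have h2M : (n : ℕ) + 2 ≤ M := by omega
                   obtain ⟨hB1ne, hA1eq, hB1eq⟩ := ih (n + 1) (by omega) (by omega) h1M
                   obtain ⟨hB2ne, hA2eq, hB2eq⟩ := ih (n + 2) (by omega) (by omega) h2M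
                   have hD1ne := hDne (n + 1) (by omega) h1M
                   have hD2ne := hDne (n + 2) (by omega) h2M
                   have hD3ne := hDne (n + 3) (by omega) hmM
                   have hrecD := hDrec n
                   have hratio : Bs (n + 2) / Bs (n + 1) = -(D (n + 1) / D (n + 2)) := by
                     rw [hB1eq, hB2eq, show n + 2 - 1 = n + 1 from rfl,
                       show n + 1 - 1 = n from rfl, pow_succ]
                     have hpn : ((-1:ℝ) ^ n) ≠ 0 := pow_ne_zero _ (by norm_num)
                     field_simp
                   have hfour : 4 + Bs (n + 2) / Bs (n + 1) = D (n + 3) / D (n + 2) := by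
                     rw [hratio, hrecD]
                     field_simp
                     ring
                   have hfourne : 4 + Bs (n + 2) / Bs (n + 1) ≠ 0 := by
                     rw [hfour]
                     exact div_ne_zero hD3ne hD2ne
                   have hle : n + 2 ≤ M - 1 := by omega
                   have hBs3 := hBrec (n + 2) (by omega) hle
                   have hAs3 := hArec (n + 2) (by omega) hle
                   rw [show n + 2 - 1 = n + 1 from rfl] at hBs3 hAs3
                   constructor
                   · rw [hBs3, hfour, hB2eq]
                     apply div_ne_zero
                     · apply neg_ne_zero.mpr
                       apply div_ne_zero _ hD2ne
                       apply mul_ne_zero (mul_ne_zero _ hu1) hB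
                       exact pow_ne_zero _ (by norm_num)
                     · exact div_ne_zero hD3ne hD2ne
                   constructor
                   · rw [hAs3, hfour, hratio, hA2eq, hA1eq]
                     have hu3 : u (n + 3) = 4 * u (n + 2) - u (n + 1) := hurec (n + 1)
                     rw [hu3]
                     field_simp
                     ring
                   · rw [hBs3, hfour, hB2eq, show n + 2 - 1 = n + 1 from rfl,
                       show n + 3 - 1 = n + 2 from rfl, pow_succ, pow_succ]
                     have hpn : ((-1:ℝ) ^ n) ≠ 0 := pow_ne_zero _ (by norm_num)
                     field_simp
                     ring
  refine ⟨h4B, ?_, ?_⟩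
  · -- Part 2
    intro m h2m hmM1
    obtain ⟨n, rfl⟩ : ∃ n, m = n + 2 := ⟨m - 2, by omega⟩
    have h3M : n + 3 ≤ M := by omega
    obtain ⟨hB1ne, _, hB1eq⟩ := key (n + 1) (by omega) (by omega)
    obtain ⟨hB2ne, _, hB2eq⟩ := key (n + 2) (by omega) (by omega)
    have hD1ne := hDne (n + 1) (by omega) (by omega)
    have hD2ne := hDne (n + 2) (by omega) (by omega)
    have hD3ne := hDne (n + 3) (by omega) h3M
    have hratio : Bs (n + 2) / Bs (n + 1) = -(D (n + 1) / D (n + 2)) := by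
      rw [hB1eq, hB2eq, show n + 2 - 1 = n + 1 from rfl,
        show n + 1 - 1 = n from rfl, pow_succ]
      have hpn : ((-1:ℝ) ^ n) ≠ 0 := pow_ne_zero _ (by norm_num)
      field_simp
    have hfour : 4 + Bs (n + 2) / Bs (n + 1) = D (n + 3) / D (n + 2) := by
      rw [hratio, hDrec n]
      field_simp
      ring
    rw [show n + 2 - 1 = n + 1 from rfl, hfour]
    exact div_ne_zero hD3ne hD2ne
  · intro m h1 h2
    exact key m h1 h2
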